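/- Let X,A be finite sets, d: X → ℝ≥0 with Σ_{x'} d(x') ≤ 1/(1-γ), and suppose for all (x',a'): |Q₁(x',a') - Q₂(x',a')| ≤ (e_P(x',a')/(1-κγ) + γε/((1-γ)(1-κγ)))V_max, and π, π_b are probability distributions over A at each state with Σ_{a'} e_P(x',a')|π(a'|x') - π_b(a'|x')| ≤ ε. Then |Σ_{x'} d(x')Σ_{a'}(Q₁(x',a') - Q₂(x',a'))(π(a'|x') - π_b(a'|x'))| ≤ ((1+γ)/((1-γ)²(1-κγ)))εV_max. -/

import Mathlib

/-- Bounding the third term in the proof of Soft-SPIBB's Theorem 2. -/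
theorem soft_spibb_third_term_bound
    {X A : Type*} [Fintype X] [Fintype A]
    (γ κ ε Vmax : ℝ)
    (hγ0 : 0 ≤ γ) (hγ1 : γ < 1) (hκ0 : 0 ≤ κ) (hκγ : κ * γ < 1)
    (hε : 0 ≤ ε) (hVmax : 0 ≤ Vmax)
    (d : X → ℝ) (hdnn : ∀ x', 0 ≤ d x')
    (hdsum : ∑ x', d x' ≤ 1 / (1 - γ))
    (Q₁ Q₂ : X → A → ℝ) (eP : X → A → ℝ) (heP : ∀ x a, 0 ≤ eP x a)
    (hQerr : ∀ x' a', |Q₁ x' a' - Q₂ x' a'| ≤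
      (eP x' a' / (1 - κ * γ) + γ * ε / ((1 - γ) * (1 - κ * γ))) * Vmax)
    (π πb : X → A → ℝ)
    (hπnn : ∀ x a, 0 ≤ π x a) (hπsum : ∀ x, ∑ a, π x a = 1)
    (hπbnn : ∀ x a, 0 ≤ πb x a) (hπbsum : ∀ x, ∑ a, πb x a = 1)
    (hcon : ∀ x', ∑ a', eP x' a' * |π x' a' - πb x' a'| ≤ ε) :
    |∑ x', d x' * ∑ a', (Q₁ x' a' - Q₂ x' a') * (π x' a' - πb x' a')| ≤
      ((1 + γ) / ((1 - γ) ^ 2 * (1 - κ * γ))) * ε * Vmax := by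
  have h1γ : (0:ℝ) < 1 - γ := by linarith
  have h1κγ : (0:ℝ) < 1 - κ * γ := by linarith
  set C : ℝ := (1 + γ) / ((1 - γ) * (1 - κ * γ)) * ε * Vmax with hC
  have hCnn : 0 ≤ C := by
    apply mul_nonneg (mul_nonneg _ hε) hVmax
    positivity
  have hinner : ∀ x, |∑ a', (Q₁ x a' - Q₂ x a') * (π x a' - πb x a')| ≤ C := by
    intro x
    have habs2 : ∑ a', |π x a' - πb x a'| ≤ 2 := by
      calc ∑ a', |π x a' - πb x a'| ≤ ∑ a', (π x a' + πb x a') := by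
            apply Finset.sum_le_sum
            intro a _
            calc |π x a - πb x a| ≤ |π x a| + |πb x a| := abs_sub _ _
              _ = π x a + πb x a := by
                  rw [abs_of_nonneg (hπnn x a), abs_of_nonneg (hπbnn x a)]
        _ = 2 := by rw [Finset.sum_add_distrib, hπsum x, hπbsum x]; norm_num
    calc |∑ a', (Q₁ x a' - Q₂ x a') * (π x a' - πb x a')|
        ≤ ∑ a', |(Q₁ x a' - Q₂ x a') * (π x a' - πb x a')| :=
          Finset.abs_sum_le_sum_abs _ _
      _ = ∑ a', |Q₁ x a' - Q₂ x a'| * |π x a' - πb x a'| := by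
          simp [abs_mul]
      _ ≤ ∑ a', (eP x a' / (1 - κ * γ) + γ * ε / ((1 - γ) * (1 - κ * γ))) * Vmax
            * |π x a' - πb x a'| := by
          apply Finset.sum_le_sum
          intro a _
          exact mul_le_mul_of_nonneg_right (hQerr x a) (abs_nonneg _)
      _ = (Vmax / (1 - κ * γ)) * (∑ a', eP x a' * |π x a' - πb x a'|)
            + (γ * ε / ((1 - γ) * (1 - κ * γ)) * Vmax) * (∑ a', |π x a' - πb x a'|) := by
          rw [Finset.mul_sum, Finset.mul_sum, ← Finset.sum_add_distrib]
          apply Finset.sum_congr rfl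
          intro a _
          ring
      _ ≤ (Vmax / (1 - κ * γ)) * ε + (γ * ε / ((1 - γ) * (1 - κ * γ)) * Vmax) * 2 := by
          have h1 : (Vmax / (1 - κ * γ)) * (∑ a', eP x a' * |π x a' - πb x a'|)
              ≤ (Vmax / (1 - κ * γ)) * ε :=
            mul_le_mul_of_nonneg_left (hcon x) (by positivity)
          have h2 : (γ * ε / ((1 - γ) * (1 - κ * γ)) * Vmax) * (∑ a', |π x a' - πb x a'|)
              ≤ (γ * ε / ((1 - γ) * (1 - κ * γ)) * Vmax) * 2 :=
            mul_le_mul_of_nonneg_left habs2 (by positivity)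
          linarith
      _ = C := by
          rw [hC]
          field_simp
          ring
  calc |∑ x', d x' * ∑ a', (Q₁ x' a' - Q₂ x' a') * (π x' a' - πb x' a')|
      ≤ ∑ x', |d x' * ∑ a', (Q₁ x' a' - Q₂ x' a') * (π x' a' - πb x' a')| :=
        Finset.abs_sum_le_sum_abs _ _
    _ = ∑ x', d x' * |∑ a', (Q₁ x' a' - Q₂ x' a') * (π x' a' - πb x' a')| := by
        apply Finset.sum_congr rfl
        intro x _
        rw [abs_mul, abs_of_nonneg (hdnn x)]
    _ ≤ ∑ x', d x' * C := by
        apply Finset.sum_le_sum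
        intro x _
        exact mul_le_mul_of_nonneg_left (hinner x) (hdnn x)
    _ = (∑ x', d x') * C := by rw [← Finset.sum_mul]
    _ ≤ (1 / (1 - γ)) * C := mul_le_mul_of_nonneg_right hdsum hCnn
    _ = ((1 + γ) / ((1 - γ) ^ 2 * (1 - κ * γ))) * ε * Vmax := by
        rw [hC]
        field_simp
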